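/- Let β > 0 and let F, u be real numbers with β u² ≤ 4. Set A = √(1 + β F²) and B = √(1 − β u²/4). Then the identity (A − B)/β = (F + (1/2) A u)² / (2A) + (A B − 1)² / (2βA) − (1/2) F u holds. Consequently (√(1 + β F²) − √(1 − β u²/4))/β ≥ −(1/2) F u, and, replacing F by −F, also (√(1 + β F²) − √(1 − β u²/4))/β ≥ (1/2) |F u|. -/

import Mathlib

lemma bi_id (β F u : ℝ) (hβ : 0 < β) (hu : β * u ^ 2 ≤ 4) :
    (Real.sqrt (1 + β * F ^ 2) - Real.sqrt (1 - β * u ^ 2 / 4)) / β =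
      (F + (1 / 2) * Real.sqrt (1 + β * F ^ 2) * u) ^ 2 / (2 * Real.sqrt (1 + β * F ^ 2)) +
        (Real.sqrt (1 + β * F ^ 2) * Real.sqrt (1 - β * u ^ 2 / 4) - 1) ^ 2 /
          (2 * β * Real.sqrt (1 + β * F ^ 2)) -
        (1 / 2) * F * u := by
  set a := Real.sqrt (1 + β * F ^ 2) with ha
  set b := Real.sqrt (1 - β * u ^ 2 / 4) with hb
  have h1 : (0:ℝ) ≤ 1 + β * F ^ 2 := by positivity
  have h2 : (0:ℝ) ≤ 1 - β * u ^ 2 / 4 := by linarith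
  have ha2 : a ^ 2 = 1 + β * F ^ 2 := Real.sq_sqrt h1
  have hb2 : b ^ 2 = 1 - β * u ^ 2 / 4 := Real.sq_sqrt h2
  have hap : 0 < a := Real.sqrt_pos.mpr (by positivity)
  field_simp
  linear_combination 4 * ha2 - (4 * a ^ 2) * hb2

lemma bi_bound (β F u : ℝ) (hβ : 0 < β) (hu : β * u ^ 2 ≤ 4) :
    -((1 / 2) * F * u) ≤
      (Real.sqrt (1 + β * F ^ 2) - Real.sqrt (1 - β * u ^ 2 / 4)) / β := by
  rw [bi_id β F u hβ hu]
  have hap : 0 < Real.sqrt (1 + β * F ^ 2) := Real.sqrt_pos.mpr (by positivity)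
  have t1 : 0 ≤ (F + (1 / 2) * Real.sqrt (1 + β * F ^ 2) * u) ^ 2 /
      (2 * Real.sqrt (1 + β * F ^ 2)) := by positivity
  have t2 : 0 ≤ (Real.sqrt (1 + β * F ^ 2) * Real.sqrt (1 - β * u ^ 2 / 4) - 1) ^ 2 /
      (2 * β * Real.sqrt (1 + β * F ^ 2)) := by positivity
  linarith

theorem stmt18 (β F u : ℝ) (hβ : 0 < β) (hu : β * u ^ 2 ≤ 4) :
    (Real.sqrt (1 + β * F ^ 2) - Real.sqrt (1 - β * u ^ 2 / 4)) / β =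
      (F + (1 / 2) * Real.sqrt (1 + β * F ^ 2) * u) ^ 2 / (2 * Real.sqrt (1 + β * F ^ 2)) +
        (Real.sqrt (1 + β * F ^ 2) * Real.sqrt (1 - β * u ^ 2 / 4) - 1) ^ 2 /
          (2 * β * Real.sqrt (1 + β * F ^ 2)) -
        (1 / 2) * F * u ∧
    -((1 / 2) * F * u) ≤ (Real.sqrt (1 + β * F ^ 2) - Real.sqrt (1 - β * u ^ 2 / 4)) / β ∧
    (1 / 2) * |F * u| ≤ (Real.sqrt (1 + β * F ^ 2) - Real.sqrt (1 - β * u ^ 2 / 4)) / β := by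
  refine ⟨bi_id β F u hβ hu, bi_bound β F u hβ hu, ?_⟩
  have h1 := bi_bound β F u hβ hu
  have h2 := bi_bound β (-F) u hβ hu
  rw [show (-F) ^ 2 = F ^ 2 by ring] at h2
  rcases abs_cases (F * u) with ⟨h, _⟩ | ⟨h, _⟩ <;> rw [h] <;> linarith
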